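/- Let p be a prime, A a commutative ring with pA = 0, n ≥ 0, and φ : F → G an isomorphism of formal group laws over A with linear coefficient c := φ′(0) ∈ A^×. Suppose F has height ≥ n, i.e. the coefficient of x^i in [p]_F is 0 for all i < p^n. Then G also has height ≥ n, and the coefficients a and b of x^{p^n} in [p]_F and [p]_G respectively satisfy b·c^{p^n} = c·a, i.e. b = c^{1−p^n}·a. In particular a = 0 if and only if b = 0, and a is a unit if and only if b is a unit, so height ≥ n, height ≥ n+1, and strict height n are isomorphism invariants. (This is the transformation law making v_n a section of ω^{⊗(p^n−1)}.) -/

import Mathlib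

noncomputable section

namespace FGL

open Finset

variable {A B : Type*} [CommRing A] [CommRing B] {τ : Type*}

/-- The total degree of a monomial exponent. -/
def deg {σ : Type*} (d : σ →₀ ℕ) : ℕ := d.sum fun _ n => n

/-- The exponent `(i, j)` as an element of `Fin 2 →₀ ℕ`. -/
def mon2 (i j : ℕ) : Fin 2 →₀ ℕ := Finsupp.single 0 i + Finsupp.single 1 j

/-- Substitution `F(g, h)` of two power series (each assumed to have zero constant
term) into a two-variable power series `F`. -/
def subst2 (F : MvPowerSeries (Fin 2) A) (g h : MvPowerSeries τ A) :
    MvPowerSeries τ A :=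
  fun d => ∑ e ∈ range (deg d + 1) ×ˢ range (deg d + 1),
    MvPowerSeries.coeff (mon2 e.1 e.2) F * MvPowerSeries.coeff d (g ^ e.1 * h ^ e.2)

/-- Substitution `f(g)` of a power series `g` (assumed to have zero constant term)
into a one-variable power series `f`. -/
def substPS (f : PowerSeries A) (g : MvPowerSeries τ A) : MvPowerSeries τ A :=
  fun d => ∑ n ∈ range (deg d + 1),
    PowerSeries.coeff n f * MvPowerSeries.coeff d (g ^ n)

/-- Composition `f(g)` of one-variable power series (`g` has zero constant term). -/
def comp (f g : PowerSeries A) : PowerSeries A := substPS f g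

/-- `F` is a (commutative, one-dimensional) formal group law:
`F(x,0) = x`, `F(0,y) = y`, `F(x,y) = F(y,x)` and `F(F(x,y),z) = F(x,F(y,z))`. -/
def IsFGL (F : MvPowerSeries (Fin 2) A) : Prop :=
  subst2 F (MvPowerSeries.X 0) 0 = MvPowerSeries.X 0 ∧
  subst2 F 0 (MvPowerSeries.X 1) = MvPowerSeries.X 1 ∧
  subst2 F (MvPowerSeries.X 1) (MvPowerSeries.X 0) = F ∧
  subst2 F (subst2 F (MvPowerSeries.X 0) (MvPowerSeries.X 1))
      (MvPowerSeries.X 2 : MvPowerSeries (Fin 3) A)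
    = subst2 F (MvPowerSeries.X 0) (subst2 F (MvPowerSeries.X 1) (MvPowerSeries.X 2))

/-- `f` is a homomorphism of formal group laws `F → G`:
`f(0) = 0` and `f(F(x,y)) = G(f(x), f(y))`. -/
def IsHom (F G : MvPowerSeries (Fin 2) A) (f : PowerSeries A) : Prop :=
  PowerSeries.constantCoeff f = 0 ∧
  substPS f F = subst2 G (substPS f (MvPowerSeries.X 0)) (substPS f (MvPowerSeries.X 1))

/-- `f` is an isomorphism of formal group laws `F → G`: a homomorphism whose
linear coefficient is a unit. -/
def IsIso (F G : MvPowerSeries (Fin 2) A) (f : PowerSeries A) : Prop :=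
  IsHom F G f ∧ IsUnit (PowerSeries.coeff 1 f)

/-- `f` is a strict isomorphism of formal group laws `F → G`: a homomorphism whose
linear coefficient is `1`. -/
def IsStrictIso (F G : MvPowerSeries (Fin 2) A) (f : PowerSeries A) : Prop :=
  IsHom F G f ∧ PowerSeries.coeff 1 f = 1

/-- The `n`-series `[n]_F` of a formal group law, defined by `[0]_F = 0` and
`[n+1]_F(x) = F(x, [n]_F(x))`. -/
def nSeries (F : MvPowerSeries (Fin 2) A) : ℕ → PowerSeries A
  | 0 => 0
  | n + 1 => subst2 F PowerSeries.X (nSeries F n)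

/-- `F` has height `≥ n` (at the prime `p`): the coefficient of `x^i` in `[p]_F`
vanishes for all `i < p^n`. -/
def HeightGE (p : ℕ) (F : MvPowerSeries (Fin 2) A) (n : ℕ) : Prop :=
  ∀ i < p ^ n, PowerSeries.coeff i (nSeries F p) = 0

/-- `F` has strict height `n` (at the prime `p`): it has height `≥ n` and the
coefficient of `x^{p^n}` in `[p]_F` is a unit. -/
def StrictHeight (p : ℕ) (F : MvPowerSeries (Fin 2) A) (n : ℕ) : Prop :=
  HeightGE p F n ∧ IsUnit (PowerSeries.coeff (p ^ n) (nSeries F p))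

/-- Coefficients of the compositional inverse of a power series `f` with `f(0) = 0`
and invertible linear coefficient. -/
def invCoeff (f : PowerSeries A) : ℕ → A
  | 0 => 0
  | 1 => Ring.inverse (PowerSeries.coeff 1 f)
  | n + 2 =>
    - Ring.inverse ((PowerSeries.coeff 1 f) ^ (n + 2)) *
      ∑ k ∈ (range (n + 2)).attach,
        invCoeff f k.1 * PowerSeries.coeff (n + 2) (f ^ (k.1 : ℕ))
  decreasing_by exact Finset.mem_range.mp k.2

/-- The compositional inverse of a power series `f` with `f(0) = 0` and invertible
linear coefficient. -/
def compInv (f : PowerSeries A) : PowerSeries A := PowerSeries.mk (invCoeff f)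

end FGL

namespace FGL

variable {A : Type*} [CommRing A] {τ : Type*}

lemma deg_add {σ : Type*} (d e : σ →₀ ℕ) : deg (d + e) = deg d + deg e :=
  Finsupp.sum_add_index' (fun _ => rfl) (fun _ _ _ => rfl)

lemma deg_single {σ : Type*} (i : σ) (k : ℕ) : deg (Finsupp.single i k) = k := by
  simp [deg]

lemma deg_zero {σ : Type*} : deg (0 : σ →₀ ℕ) = 0 := rfl

lemma one_le_deg {σ : Type*} {d : σ →₀ ℕ} (h : d ≠ 0) : 1 ≤ deg d := by
  obtain ⟨i, hi⟩ := Finsupp.ne_iff.mp h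
  simp only [Finsupp.coe_zero, Pi.zero_apply] at hi
  calc 1 ≤ d i := Nat.one_le_iff_ne_zero.mpr hi
    _ ≤ deg d := Finset.single_le_sum (f := fun a => d a) (fun _ _ => Nat.zero_le _)
        (Finsupp.mem_support_iff.mpr hi)

lemma deg_eq_zero {σ : Type*} {d : σ →₀ ℕ} (h : deg d = 0) : d = 0 := by
  by_contra hne
  have := one_le_deg hne
  omega

lemma mon2_apply0 (i j : ℕ) : mon2 i j 0 = i := by
  simp [mon2, Finsupp.single_apply]

lemma mon2_apply1 (i j : ℕ) : mon2 i j 1 = j := by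
  simp [mon2, Finsupp.single_apply]

lemma eq_mon2 (d : Fin 2 →₀ ℕ) : d = mon2 (d 0) (d 1) := by
  ext x
  fin_cases x <;> simp [mon2, Finsupp.single_apply]

lemma mon2_inj {i j i' j' : ℕ} (h : mon2 i j = mon2 i' j') : i = i' ∧ j = j' := by
  constructor
  · have := congrArg (fun f : Fin 2 →₀ ℕ => f 0) h
    simpa [mon2_apply0] using this
  · have := congrArg (fun f : Fin 2 →₀ ℕ => f 1) h
    simpa [mon2_apply1] using this

lemma deg_mon2 (i j : ℕ) : deg (mon2 i j) = i + j := by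
  rw [mon2, deg_add, deg_single, deg_single]

lemma mon2_add (i j i' j' : ℕ) : mon2 i j + mon2 i' j' = mon2 (i + i') (j + j') := by
  ext x
  fin_cases x <;> simp [mon2, Finsupp.single_apply]

lemma mon2_zero : mon2 0 0 = 0 := by
  simp [mon2]

end FGL

namespace FGL

open Finset

variable {A : Type*} [CommRing A] {τ : Type*}

lemma coeff_pow_zero_of_lt {g : MvPowerSeries τ A} (hg : MvPowerSeries.constantCoeff g = 0)
    {k : ℕ} : ∀ {d : τ →₀ ℕ}, deg d < k → MvPowerSeries.coeff d (g ^ k) = 0 := by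
  classical
  induction k with
  | zero => exact fun h => absurd h (Nat.not_lt_zero _)
  | succ k ih =>
    intro d h
    rw [pow_succ, MvPowerSeries.coeff_mul]
    apply Finset.sum_eq_zero
    rintro ⟨d1, d2⟩ hp
    dsimp only
    rw [Finset.HasAntidiagonal.mem_antidiagonal] at hp
    by_cases h2 : d2 = 0
    · have : MvPowerSeries.coeff d2 g = 0 := by
        rw [h2, MvPowerSeries.coeff_zero_eq_constantCoeff, hg]
      rw [this, mul_zero]
    · have hd : deg d1 + deg d2 = deg d := by rw [← deg_add, hp]
      have : deg d1 < k := by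
        have := one_le_deg h2
        omega
      rw [ih this, zero_mul]

lemma coeff_mulpow_zero_of_lt {g h : MvPowerSeries τ A}
    (hg : MvPowerSeries.constantCoeff g = 0) (hh : MvPowerSeries.constantCoeff h = 0)
    {i j : ℕ} {d : τ →₀ ℕ} (hd : deg d < i + j) :
    MvPowerSeries.coeff d (g ^ i * h ^ j) = 0 := by
  classical
  rw [MvPowerSeries.coeff_mul]
  apply Finset.sum_eq_zero
  rintro ⟨d1, d2⟩ hp
  dsimp only
  rw [Finset.HasAntidiagonal.mem_antidiagonal] at hp
  have hdeg : deg d1 + deg d2 = deg d := by rw [← deg_add, hp]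
  rcases lt_or_ge (deg d1) i with h1 | h1
  · rw [coeff_pow_zero_of_lt hg h1, zero_mul]
  · rw [coeff_pow_zero_of_lt hh (by omega), mul_zero]

lemma coeff_subst2_def (F : MvPowerSeries (Fin 2) A) (g h : MvPowerSeries τ A) (d : τ →₀ ℕ) :
    MvPowerSeries.coeff d (subst2 F g h) =
      ∑ e ∈ Finset.range (deg d + 1) ×ˢ range (deg d + 1),
        MvPowerSeries.coeff (mon2 e.1 e.2) F * MvPowerSeries.coeff d (g ^ e.1 * h ^ e.2) :=
  rfl

lemma coeff_substPS_def (f : PowerSeries A) (g : MvPowerSeries τ A) (d : τ →₀ ℕ) :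
    MvPowerSeries.coeff d (substPS f g) =
      ∑ n ∈ Finset.range (deg d + 1), PowerSeries.coeff n f * MvPowerSeries.coeff d (g ^ n) :=
  rfl

lemma coeff_subst2 (F : MvPowerSeries (Fin 2) A) {g h : MvPowerSeries τ A}
    (hg : MvPowerSeries.constantCoeff g = 0) (hh : MvPowerSeries.constantCoeff h = 0)
    {d : τ →₀ ℕ} {M : ℕ} (hM : deg d ≤ M) :
    MvPowerSeries.coeff d (subst2 F g h) =
      ∑ e ∈ Finset.range (M + 1) ×ˢ range (M + 1),
        MvPowerSeries.coeff (mon2 e.1 e.2) F * MvPowerSeries.coeff d (g ^ e.1 * h ^ e.2) := by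
  rw [coeff_subst2_def]
  apply Finset.sum_subset
  · rintro ⟨i, j⟩ hx
    simp only [mem_product, mem_range] at hx ⊢
    omega
  · rintro ⟨i, j⟩ hmem hnot
    simp only [mem_product, mem_range] at hmem hnot
    have : deg d < i + j := by omega
    rw [coeff_mulpow_zero_of_lt hg hh this, mul_zero]

lemma coeff_substPS (f : PowerSeries A) {g : MvPowerSeries τ A}
    (hg : MvPowerSeries.constantCoeff g = 0)
    {d : τ →₀ ℕ} {M : ℕ} (hM : deg d ≤ M) :
    MvPowerSeries.coeff d (substPS f g) =
      ∑ n ∈ Finset.range (M + 1), PowerSeries.coeff n f * MvPowerSeries.coeff d (g ^ n) := by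
  rw [coeff_substPS_def]
  apply Finset.sum_subset
  · intro x hx
    simp only [mem_range] at hx ⊢
    omega
  · intro k hk hnk
    simp only [mem_range] at hk hnk
    rw [coeff_pow_zero_of_lt hg (by omega), mul_zero]

lemma constantCoeff_subst2 (F : MvPowerSeries (Fin 2) A) (g h : MvPowerSeries τ A) :
    MvPowerSeries.constantCoeff (subst2 F g h) = MvPowerSeries.constantCoeff F := by
  rw [← MvPowerSeries.coeff_zero_eq_constantCoeff_apply, coeff_subst2_def]
  rw [deg_zero]
  rw [show range (0 + 1) ×ˢ range (0 + 1) = {((0 : ℕ), (0 : ℕ))} from rfl]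
  rw [Finset.sum_singleton]
  simp [mon2_zero]

lemma constantCoeff_substPS (f : PowerSeries A) (g : MvPowerSeries τ A) :
    MvPowerSeries.constantCoeff (substPS f g) = PowerSeries.constantCoeff f := by
  rw [← MvPowerSeries.coeff_zero_eq_constantCoeff_apply, coeff_substPS_def]
  rw [deg_zero]
  simp [PowerSeries.coeff_zero_eq_constantCoeff]

end FGL

namespace FGL

open Finset

variable {A : Type*} [CommRing A] {τ : Type*}

lemma subst2_monomial (a : A) (i j : ℕ) {g h : MvPowerSeries τ A}
    (hg : MvPowerSeries.constantCoeff g = 0) (hh : MvPowerSeries.constantCoeff h = 0) :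
    subst2 (MvPowerSeries.monomial (mon2 i j) a) g h = MvPowerSeries.C a * (g ^ i * h ^ j) := by
  classical
  apply MvPowerSeries.ext
  intro d
  have hM : deg d ≤ max (deg d) (max i j) := le_max_left _ _
  rw [coeff_subst2 _ hg hh hM, MvPowerSeries.coeff_C_mul]
  rw [Finset.sum_eq_single_of_mem (i, j)
      (by simp only [mem_product, mem_range]; omega)]
  · rw [MvPowerSeries.coeff_monomial, if_pos rfl]
  · rintro ⟨i', j'⟩ _ hne
    dsimp only
    rw [MvPowerSeries.coeff_monomial, if_neg, zero_mul]
    intro hEq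
    obtain ⟨h1, h2⟩ := mon2_inj hEq
    exact hne (by simp [h1, h2])

lemma subst2_sum {ι : Type*} (s : Finset ι) (F : ι → MvPowerSeries (Fin 2) A)
    (g h : MvPowerSeries τ A) :
    subst2 (∑ x ∈ s, F x) g h = ∑ x ∈ s, subst2 (F x) g h := by
  apply MvPowerSeries.ext
  intro d
  rw [coeff_subst2_def, map_sum]
  simp_rw [coeff_subst2_def, map_sum, Finset.sum_mul]
  exact Finset.sum_comm

/-- Truncation of a two-variable power series to the rectangle `[0,M] × [0,M]`. -/
def trunc2 (M : ℕ) (F : MvPowerSeries (Fin 2) A) : MvPowerSeries (Fin 2) A :=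
  ∑ e ∈ Finset.range (M + 1) ×ˢ range (M + 1),
    MvPowerSeries.monomial (mon2 e.1 e.2) (MvPowerSeries.coeff (mon2 e.1 e.2) F)

lemma coeff_trunc2 (M : ℕ) (F : MvPowerSeries (Fin 2) A) (e : Fin 2 →₀ ℕ) :
    MvPowerSeries.coeff e (trunc2 M F) =
      if e 0 ≤ M ∧ e 1 ≤ M then MvPowerSeries.coeff e F else 0 := by
  classical
  rw [trunc2, map_sum]
  split_ifs with hc
  · rw [Finset.sum_eq_single_of_mem (e 0, e 1)
        (by simp only [mem_product, mem_range]; omega)]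
    · rw [MvPowerSeries.coeff_monomial, if_pos (eq_mon2 e)]
      rw [← eq_mon2 e]
    · rintro ⟨i', j'⟩ _ hne
      dsimp only
      rw [MvPowerSeries.coeff_monomial, if_neg]
      intro hEq
      apply hne
      have h0 := congrArg (fun f : Fin 2 →₀ ℕ => f 0) hEq
      have h1 := congrArg (fun f : Fin 2 →₀ ℕ => f 1) hEq
      simp only [mon2_apply0, mon2_apply1] at h0 h1
      simp [← h0, ← h1]
  · apply Finset.sum_eq_zero
    rintro ⟨i', j'⟩ hmem
    dsimp only
    rw [MvPowerSeries.coeff_monomial, if_neg]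
    intro hEq
    have h0 := congrArg (fun f : Fin 2 →₀ ℕ => f 0) hEq
    have h1 := congrArg (fun f : Fin 2 →₀ ℕ => f 1) hEq
    simp only [mon2_apply0, mon2_apply1] at h0 h1
    simp only [mem_product, mem_range] at hmem
    omega

lemma coeff_subst2_trunc2 (F : MvPowerSeries (Fin 2) A) {g h : MvPowerSeries τ A}
    (hg : MvPowerSeries.constantCoeff g = 0) (hh : MvPowerSeries.constantCoeff h = 0)
    {d : τ →₀ ℕ} {M : ℕ} (hM : deg d ≤ M) :
    MvPowerSeries.coeff d (subst2 (trunc2 M F) g h) = MvPowerSeries.coeff d (subst2 F g h) := by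
  rw [coeff_subst2 _ hg hh hM, coeff_subst2 _ hg hh hM]
  apply Finset.sum_congr rfl
  rintro ⟨i, j⟩ hmem
  simp only [mem_product, mem_range] at hmem
  dsimp only
  rw [coeff_trunc2, if_pos]
  rw [mon2_apply0, mon2_apply1]
  omega

lemma coeff_mul_trunc2 (F F' : MvPowerSeries (Fin 2) A) {M i j : ℕ} (hi : i ≤ M) (hj : j ≤ M) :
    MvPowerSeries.coeff (mon2 i j) (trunc2 M F * trunc2 M F') =
      MvPowerSeries.coeff (mon2 i j) (F * F') := by
  classical
  rw [MvPowerSeries.coeff_mul, MvPowerSeries.coeff_mul]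
  apply Finset.sum_congr rfl
  rintro ⟨d1, d2⟩ hp
  dsimp only
  rw [Finset.HasAntidiagonal.mem_antidiagonal] at hp
  have e0 : d1 0 + d2 0 = i := by
    have := congrArg (fun f : Fin 2 →₀ ℕ => f 0) hp
    simpa [mon2_apply0] using this
  have e1 : d1 1 + d2 1 = j := by
    have := congrArg (fun f : Fin 2 →₀ ℕ => f 1) hp
    simpa [mon2_apply1] using this
  rw [coeff_trunc2, coeff_trunc2, if_pos ⟨by omega, by omega⟩, if_pos ⟨by omega, by omega⟩]

lemma subst2_monomial_mul (e e' : Fin 2 →₀ ℕ) (a b : A) {g h : MvPowerSeries τ A}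
    (hg : MvPowerSeries.constantCoeff g = 0) (hh : MvPowerSeries.constantCoeff h = 0) :
    subst2 (MvPowerSeries.monomial e a * MvPowerSeries.monomial e' b) g h =
      subst2 (MvPowerSeries.monomial e a) g h * subst2 (MvPowerSeries.monomial e' b) g h := by
  rw [MvPowerSeries.monomial_mul_monomial]
  rw [eq_mon2 e, eq_mon2 e', mon2_add]
  rw [subst2_monomial _ _ _ hg hh, subst2_monomial _ _ _ hg hh, subst2_monomial _ _ _ hg hh]
  rw [map_mul, pow_add, pow_add]
  ring

lemma subst2_mul (F F' : MvPowerSeries (Fin 2) A) {g h : MvPowerSeries τ A}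
    (hg : MvPowerSeries.constantCoeff g = 0) (hh : MvPowerSeries.constantCoeff h = 0) :
    subst2 (F * F') g h = subst2 F g h * subst2 F' g h := by
  classical
  apply MvPowerSeries.ext
  intro d
  set M := deg d with hMdef
  have hM : deg d ≤ M := le_refl _
  have step1 : MvPowerSeries.coeff d (subst2 (F * F') g h) =
      MvPowerSeries.coeff d (subst2 (trunc2 M F * trunc2 M F') g h) := by
    rw [coeff_subst2 _ hg hh hM, coeff_subst2 _ hg hh hM]
    apply Finset.sum_congr rfl
    rintro ⟨i, j⟩ hmem
    simp only [mem_product, mem_range] at hmem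
    dsimp only
    rw [coeff_mul_trunc2 F F' (by omega) (by omega)]
  have step2 : subst2 (trunc2 M F * trunc2 M F') g h =
      subst2 (trunc2 M F) g h * subst2 (trunc2 M F') g h := by
    have expand : ∀ (H : MvPowerSeries (Fin 2) A), subst2 (trunc2 M H) g h =
        ∑ e ∈ Finset.range (M + 1) ×ˢ range (M + 1),
          subst2 (MvPowerSeries.monomial (mon2 e.1 e.2)
            (MvPowerSeries.coeff (mon2 e.1 e.2) H)) g h := by
      intro H
      rw [trunc2, subst2_sum]
    have h1 : trunc2 M F * trunc2 M F' =
        ∑ e ∈ Finset.range (M + 1) ×ˢ range (M + 1), ∑ e' ∈ Finset.range (M + 1) ×ˢ range (M + 1),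
          MvPowerSeries.monomial (mon2 e.1 e.2) (MvPowerSeries.coeff (mon2 e.1 e.2) F) *
          MvPowerSeries.monomial (mon2 e'.1 e'.2) (MvPowerSeries.coeff (mon2 e'.1 e'.2) F') := by
      rw [trunc2, trunc2, Finset.sum_mul_sum]
    rw [h1, expand F, expand F', Finset.sum_mul_sum, subst2_sum]
    apply Finset.sum_congr rfl
    intro e _
    rw [subst2_sum]
    exact Finset.sum_congr rfl fun e' _ => subst2_monomial_mul _ _ _ _ hg hh
  rw [step1, step2, MvPowerSeries.coeff_mul, MvPowerSeries.coeff_mul]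
  apply Finset.sum_congr rfl
  rintro ⟨d1, d2⟩ hp
  dsimp only
  rw [Finset.HasAntidiagonal.mem_antidiagonal] at hp
  have hdd : deg d1 + deg d2 = deg d := by rw [← deg_add, hp]
  rw [coeff_subst2_trunc2 F hg hh (by omega), coeff_subst2_trunc2 F' hg hh (by omega)]

lemma subst2_one {g h : MvPowerSeries τ A}
    (hg : MvPowerSeries.constantCoeff g = 0) (hh : MvPowerSeries.constantCoeff h = 0) :
    subst2 (1 : MvPowerSeries (Fin 2) A) g h = 1 := by
  have h1 : (1 : MvPowerSeries (Fin 2) A) = MvPowerSeries.monomial (mon2 0 0) 1 := by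
    rw [mon2_zero, MvPowerSeries.monomial_zero_one]
  rw [h1, subst2_monomial _ _ _ hg hh]
  simp

lemma subst2_pow (F : MvPowerSeries (Fin 2) A) {g h : MvPowerSeries τ A}
    (hg : MvPowerSeries.constantCoeff g = 0) (hh : MvPowerSeries.constantCoeff h = 0)
    (k : ℕ) : subst2 (F ^ k) g h = (subst2 F g h) ^ k := by
  induction k with
  | zero => simpa using subst2_one hg hh
  | succ k ih => rw [pow_succ, pow_succ, subst2_mul _ _ hg hh, ih]

end FGL

namespace FGL

open Finset

variable {A : Type*} [CommRing A] {τ : Type*}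

lemma substPS_monomial (a : A) (k : ℕ) {g : MvPowerSeries τ A}
    (hg : MvPowerSeries.constantCoeff g = 0) :
    substPS (PowerSeries.monomial k a) g = MvPowerSeries.C a * g ^ k := by
  classical
  apply MvPowerSeries.ext
  intro d
  have hM : deg d ≤ max (deg d) k := le_max_left _ _
  rw [coeff_substPS _ hg hM, MvPowerSeries.coeff_C_mul]
  rw [Finset.sum_eq_single_of_mem k (by simp only [mem_range]; omega)]
  · rw [PowerSeries.coeff_monomial, if_pos rfl]
  · intro k' _ hne
    rw [PowerSeries.coeff_monomial, if_neg hne, zero_mul]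

lemma substPS_sum {ι : Type*} (s : Finset ι) (f : ι → PowerSeries A) (g : MvPowerSeries τ A) :
    substPS (∑ x ∈ s, f x) g = ∑ x ∈ s, substPS (f x) g := by
  apply MvPowerSeries.ext
  intro d
  rw [coeff_substPS_def, map_sum]
  simp_rw [coeff_substPS_def, map_sum, Finset.sum_mul]
  exact Finset.sum_comm

/-- Truncation of a one-variable power series in degrees `≤ M`. -/
def trunc1 (M : ℕ) (f : PowerSeries A) : PowerSeries A :=
  ∑ k ∈ Finset.range (M + 1), PowerSeries.monomial k (PowerSeries.coeff k f)

lemma coeff_trunc1 (M : ℕ) (f : PowerSeries A) (m : ℕ) :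
    PowerSeries.coeff m (trunc1 M f) =
      if m ≤ M then PowerSeries.coeff m f else 0 := by
  classical
  rw [trunc1, map_sum]
  split_ifs with hc
  · rw [Finset.sum_eq_single_of_mem m (by simp only [mem_range]; omega)]
    · rw [PowerSeries.coeff_monomial, if_pos rfl]
    · intro k' _ hne
      rw [PowerSeries.coeff_monomial, if_neg (Ne.symm hne)]
  · apply Finset.sum_eq_zero
    intro k' hk'
    simp only [mem_range] at hk'
    rw [PowerSeries.coeff_monomial, if_neg (by omega)]

lemma coeff_substPS_trunc1 (f : PowerSeries A) {g : MvPowerSeries τ A}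
    (hg : MvPowerSeries.constantCoeff g = 0)
    {d : τ →₀ ℕ} {M : ℕ} (hM : deg d ≤ M) :
    MvPowerSeries.coeff d (substPS (trunc1 M f) g) =
      MvPowerSeries.coeff d (substPS f g) := by
  rw [coeff_substPS _ hg hM, coeff_substPS _ hg hM]
  apply Finset.sum_congr rfl
  intro k hk
  simp only [mem_range] at hk
  rw [coeff_trunc1, if_pos (by omega)]

lemma coeff_mul_trunc1 (f f' : PowerSeries A) {M m : ℕ} (hm : m ≤ M) :
    PowerSeries.coeff m (trunc1 M f * trunc1 M f') =
      PowerSeries.coeff m (f * f') := by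
  rw [PowerSeries.coeff_mul, PowerSeries.coeff_mul]
  apply Finset.sum_congr rfl
  rintro ⟨m1, m2⟩ hp
  dsimp only
  rw [Finset.HasAntidiagonal.mem_antidiagonal] at hp
  rw [coeff_trunc1, coeff_trunc1, if_pos (by omega), if_pos (by omega)]

lemma ps_monomial_mul_monomial (k k' : ℕ) (a b : A) :
    PowerSeries.monomial k a * PowerSeries.monomial k' b =
      PowerSeries.monomial (k + k') (a * b) := by
  show MvPowerSeries.monomial (Finsupp.single () k) a *
      MvPowerSeries.monomial (Finsupp.single () k') b =
    MvPowerSeries.monomial (Finsupp.single () (k + k')) (a * b)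
  rw [MvPowerSeries.monomial_mul_monomial, Finsupp.single_add]

lemma substPS_monomial_mul (k k' : ℕ) (a b : A) {g : MvPowerSeries τ A}
    (hg : MvPowerSeries.constantCoeff g = 0) :
    substPS (PowerSeries.monomial k a * PowerSeries.monomial k' b) g =
      substPS (PowerSeries.monomial k a) g * substPS (PowerSeries.monomial k' b) g := by
  rw [ps_monomial_mul_monomial]
  rw [substPS_monomial _ _ hg, substPS_monomial _ _ hg, substPS_monomial _ _ hg]
  rw [map_mul, pow_add]
  ring

lemma substPS_mul (f f' : PowerSeries A) {g : MvPowerSeries τ A}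
    (hg : MvPowerSeries.constantCoeff g = 0) :
    substPS (f * f') g = substPS f g * substPS f' g := by
  classical
  apply MvPowerSeries.ext
  intro d
  set M := deg d with hMdef
  have hM : deg d ≤ M := le_refl _
  have step1 : MvPowerSeries.coeff d (substPS (f * f') g) =
      MvPowerSeries.coeff d (substPS (trunc1 M f * trunc1 M f') g) := by
    rw [coeff_substPS _ hg hM, coeff_substPS _ hg hM]
    apply Finset.sum_congr rfl
    intro k hk
    simp only [mem_range] at hk
    rw [coeff_mul_trunc1 f f' (by omega)]
  have expand : ∀ (u : PowerSeries A), substPS (trunc1 M u) g =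
      ∑ k ∈ Finset.range (M + 1),
        substPS (PowerSeries.monomial k (PowerSeries.coeff k u)) g := by
    intro u
    rw [trunc1, substPS_sum]
  have step2 : substPS (trunc1 M f * trunc1 M f') g =
      substPS (trunc1 M f) g * substPS (trunc1 M f') g := by
    have h1 : trunc1 M f * trunc1 M f' =
        ∑ k ∈ Finset.range (M + 1), ∑ k' ∈ Finset.range (M + 1),
          PowerSeries.monomial k (PowerSeries.coeff k f) *
          PowerSeries.monomial k' (PowerSeries.coeff k' f') := by
      rw [trunc1, trunc1, Finset.sum_mul_sum]
    rw [h1, expand f, expand f', Finset.sum_mul_sum, substPS_sum]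
    apply Finset.sum_congr rfl
    intro k _
    rw [substPS_sum]
    exact Finset.sum_congr rfl fun k' _ => substPS_monomial_mul _ _ _ _ hg
  rw [step1, step2, MvPowerSeries.coeff_mul, MvPowerSeries.coeff_mul]
  apply Finset.sum_congr rfl
  rintro ⟨d1, d2⟩ hp
  dsimp only
  rw [Finset.HasAntidiagonal.mem_antidiagonal] at hp
  have hdd : deg d1 + deg d2 = deg d := by rw [← deg_add, hp]
  rw [coeff_substPS_trunc1 f hg (by omega), coeff_substPS_trunc1 f' hg (by omega)]

lemma substPS_one {g : MvPowerSeries τ A} (hg : MvPowerSeries.constantCoeff g = 0) :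
    substPS (1 : PowerSeries A) g = 1 := by
  have h1 : (1 : PowerSeries A) = PowerSeries.monomial 0 1 := by
    simp
  rw [h1, substPS_monomial _ _ hg]
  simp

lemma substPS_pow (f : PowerSeries A) {g : MvPowerSeries τ A}
    (hg : MvPowerSeries.constantCoeff g = 0) (k : ℕ) :
    substPS (f ^ k) g = (substPS f g) ^ k := by
  induction k with
  | zero => simpa using substPS_one hg
  | succ k ih => rw [pow_succ, pow_succ, substPS_mul _ _ hg, ih]

end FGL

namespace FGL

open Finset

variable {A : Type*} [CommRing A] {τ : Type*}

lemma substPS_subst2 (f : PowerSeries A) {F : MvPowerSeries (Fin 2) A}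
    (hF : MvPowerSeries.constantCoeff F = 0)
    {u v : MvPowerSeries τ A} (hu : MvPowerSeries.constantCoeff u = 0)
    (hv : MvPowerSeries.constantCoeff v = 0) :
    substPS f (subst2 F u v) = subst2 (substPS f F) u v := by
  apply MvPowerSeries.ext
  intro d
  set D := deg d with hD
  have hSc : MvPowerSeries.constantCoeff (subst2 F u v) = 0 := by
    rw [constantCoeff_subst2, hF]
  have lhs_eq : MvPowerSeries.coeff d (substPS f (subst2 F u v)) =
      ∑ k ∈ Finset.range (2 * D + 1), ∑ e ∈ Finset.range (D + 1) ×ˢ range (D + 1),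
        PowerSeries.coeff k f * (MvPowerSeries.coeff (mon2 e.1 e.2) (F ^ k) *
          MvPowerSeries.coeff d (u ^ e.1 * v ^ e.2)) := by
    rw [coeff_substPS f hSc (show deg d ≤ 2 * D by omega)]
    apply Finset.sum_congr rfl
    intro k _
    rw [← subst2_pow F hu hv k, coeff_subst2 (F ^ k) hu hv (le_refl _), Finset.mul_sum]
  have rhs_eq : MvPowerSeries.coeff d (subst2 (substPS f F) u v) =
      ∑ e ∈ Finset.range (D + 1) ×ˢ range (D + 1), ∑ k ∈ Finset.range (2 * D + 1),
        PowerSeries.coeff k f * (MvPowerSeries.coeff (mon2 e.1 e.2) (F ^ k) *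
          MvPowerSeries.coeff d (u ^ e.1 * v ^ e.2)) := by
    rw [coeff_subst2 _ hu hv (le_refl _)]
    apply Finset.sum_congr rfl
    rintro ⟨i, j⟩ hmem
    dsimp only
    simp only [mem_product, mem_range] at hmem
    have hb : deg (mon2 i j) ≤ 2 * D := by rw [deg_mon2]; omega
    rw [coeff_substPS f hF hb, Finset.sum_mul]
    apply Finset.sum_congr rfl
    intro k _
    ring
  rw [lhs_eq, rhs_eq, Finset.sum_comm]

lemma subst2_subst2 (G : MvPowerSeries (Fin 2) A) {P Q : MvPowerSeries (Fin 2) A}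
    (hP : MvPowerSeries.constantCoeff P = 0)
    (hQ : MvPowerSeries.constantCoeff Q = 0)
    {u v : MvPowerSeries τ A} (hu : MvPowerSeries.constantCoeff u = 0)
    (hv : MvPowerSeries.constantCoeff v = 0) :
    subst2 (subst2 G P Q) u v = subst2 G (subst2 P u v) (subst2 Q u v) := by
  apply MvPowerSeries.ext
  intro d
  set D := deg d with hD
  have hPc : MvPowerSeries.constantCoeff (subst2 P u v) = 0 := by
    rw [constantCoeff_subst2, hP]
  have hQc : MvPowerSeries.constantCoeff (subst2 Q u v) = 0 := by
    rw [constantCoeff_subst2, hQ]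
  have lhs_eq : MvPowerSeries.coeff d (subst2 (subst2 G P Q) u v) =
      ∑ a ∈ Finset.range (D + 1) ×ˢ range (D + 1), ∑ e ∈ Finset.range (2 * D + 1) ×ˢ range (2 * D + 1),
        MvPowerSeries.coeff (mon2 e.1 e.2) G *
          (MvPowerSeries.coeff (mon2 a.1 a.2) (P ^ e.1 * Q ^ e.2) *
            MvPowerSeries.coeff d (u ^ a.1 * v ^ a.2)) := by
    rw [coeff_subst2 _ hu hv (le_refl _)]
    apply Finset.sum_congr rfl
    rintro ⟨a, b⟩ hmem
    dsimp only
    simp only [mem_product, mem_range] at hmem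
    have hb : deg (mon2 a b) ≤ 2 * D := by rw [deg_mon2]; omega
    rw [coeff_subst2 G hP hQ hb, Finset.sum_mul]
    apply Finset.sum_congr rfl
    intro e _
    ring
  have rhs_eq : MvPowerSeries.coeff d (subst2 G (subst2 P u v) (subst2 Q u v)) =
      ∑ e ∈ Finset.range (2 * D + 1) ×ˢ range (2 * D + 1), ∑ a ∈ Finset.range (D + 1) ×ˢ range (D + 1),
        MvPowerSeries.coeff (mon2 e.1 e.2) G *
          (MvPowerSeries.coeff (mon2 a.1 a.2) (P ^ e.1 * Q ^ e.2) *
            MvPowerSeries.coeff d (u ^ a.1 * v ^ a.2)) := by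
    rw [coeff_subst2 G hPc hQc (show deg d ≤ 2 * D by omega)]
    apply Finset.sum_congr rfl
    rintro ⟨i, j⟩ _
    dsimp only
    have hmul : (subst2 P u v) ^ i * (subst2 Q u v) ^ j = subst2 (P ^ i * Q ^ j) u v := by
      rw [subst2_mul _ _ hu hv, subst2_pow _ hu hv, subst2_pow _ hu hv]
    rw [hmul, coeff_subst2 _ hu hv (le_refl _), Finset.mul_sum]
  rw [lhs_eq, rhs_eq, Finset.sum_comm]

lemma mon2_eq_single0 (i : ℕ) : mon2 i 0 = Finsupp.single 0 i := by
  simp [mon2]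

lemma mon2_eq_single1 (j : ℕ) : mon2 0 j = Finsupp.single 1 j := by
  simp [mon2]

lemma coeff_substPS_X0 (f : PowerSeries A) (i j : ℕ) :
    MvPowerSeries.coeff (mon2 i j)
        (substPS f (MvPowerSeries.X 0 : MvPowerSeries (Fin 2) A)) =
      if j = 0 then PowerSeries.coeff i f else 0 := by
  classical
  have hX : MvPowerSeries.constantCoeff (MvPowerSeries.X 0 : MvPowerSeries (Fin 2) A) = 0 :=
    MvPowerSeries.constantCoeff_X 0
  rw [coeff_substPS f hX (le_of_eq (deg_mon2 i j))]
  simp_rw [MvPowerSeries.X_pow_eq, MvPowerSeries.coeff_monomial]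
  split_ifs with hj
  · subst hj
    rw [Finset.sum_eq_single_of_mem i (mem_range.mpr (by omega))]
    · rw [if_pos (mon2_eq_single0 i), mul_one]
    · intro k _ hk
      rw [if_neg, mul_zero]
      intro hEq
      apply hk
      have := congrArg (fun f : Fin 2 →₀ ℕ => f 0) hEq
      simpa [mon2_apply0, Finsupp.single_apply] using this.symm
  · apply Finset.sum_eq_zero
    intro k _
    rw [if_neg, mul_zero]
    intro hEq
    apply hj
    have := congrArg (fun f : Fin 2 →₀ ℕ => f 1) hEq
    simpa [mon2_apply1, Finsupp.single_apply] using this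

lemma coeff_substPS_X1 (f : PowerSeries A) (i j : ℕ) :
    MvPowerSeries.coeff (mon2 i j)
        (substPS f (MvPowerSeries.X 1 : MvPowerSeries (Fin 2) A)) =
      if i = 0 then PowerSeries.coeff j f else 0 := by
  classical
  have hX : MvPowerSeries.constantCoeff (MvPowerSeries.X 1 : MvPowerSeries (Fin 2) A) = 0 :=
    MvPowerSeries.constantCoeff_X 1
  rw [coeff_substPS f hX (le_of_eq (deg_mon2 i j))]
  simp_rw [MvPowerSeries.X_pow_eq, MvPowerSeries.coeff_monomial]
  split_ifs with hi
  · subst hi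
    rw [Finset.sum_eq_single_of_mem j (mem_range.mpr (by omega))]
    · rw [if_pos (mon2_eq_single1 j), mul_one]
    · intro k _ hk
      rw [if_neg, mul_zero]
      intro hEq
      apply hk
      have := congrArg (fun f : Fin 2 →₀ ℕ => f 1) hEq
      simpa [mon2_apply1, Finsupp.single_apply] using this.symm
  · apply Finset.sum_eq_zero
    intro k _
    rw [if_neg, mul_zero]
    intro hEq
    apply hi
    have := congrArg (fun f : Fin 2 →₀ ℕ => f 0) hEq
    simpa [mon2_apply0, Finsupp.single_apply] using this

lemma subst2_substPS_X0 (f : PowerSeries A) {u v : MvPowerSeries τ A}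
    (hu : MvPowerSeries.constantCoeff u = 0)
    (hv : MvPowerSeries.constantCoeff v = 0) :
    subst2 (substPS f (MvPowerSeries.X 0)) u v = substPS f u := by
  classical
  apply MvPowerSeries.ext
  intro d
  set D := deg d with hD
  rw [coeff_subst2 _ hu hv (le_refl D), coeff_substPS f hu (le_refl D), Finset.sum_product]
  calc ∑ i ∈ Finset.range (D + 1), ∑ j ∈ Finset.range (D + 1),
        MvPowerSeries.coeff (mon2 i j) (substPS f (MvPowerSeries.X 0)) *
          MvPowerSeries.coeff d (u ^ i * v ^ j)
      = ∑ i ∈ Finset.range (D + 1), ∑ j ∈ Finset.range (D + 1),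
          (if j = 0 then PowerSeries.coeff i f else 0) *
            MvPowerSeries.coeff d (u ^ i * v ^ j) := by
        exact Finset.sum_congr rfl fun i _ => Finset.sum_congr rfl fun j _ => by
          rw [coeff_substPS_X0]
    _ = ∑ i ∈ Finset.range (D + 1), PowerSeries.coeff i f * MvPowerSeries.coeff d (u ^ i) := by
        apply Finset.sum_congr rfl
        intro i _
        rw [Finset.sum_eq_single_of_mem 0 (mem_range.mpr (by omega))]
        · rw [if_pos rfl, pow_zero, mul_one]
        · intro j _ hj
          rw [if_neg hj, zero_mul]

lemma subst2_substPS_X1 (f : PowerSeries A) {u v : MvPowerSeries τ A}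
    (hu : MvPowerSeries.constantCoeff u = 0)
    (hv : MvPowerSeries.constantCoeff v = 0) :
    subst2 (substPS f (MvPowerSeries.X 1)) u v = substPS f v := by
  classical
  apply MvPowerSeries.ext
  intro d
  set D := deg d with hD
  rw [coeff_subst2 _ hu hv (le_refl D), coeff_substPS f hv (le_refl D), Finset.sum_product]
  calc ∑ i ∈ Finset.range (D + 1), ∑ j ∈ Finset.range (D + 1),
        MvPowerSeries.coeff (mon2 i j) (substPS f (MvPowerSeries.X 1)) *
          MvPowerSeries.coeff d (u ^ i * v ^ j)
      = ∑ i ∈ Finset.range (D + 1), ∑ j ∈ Finset.range (D + 1),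
          (if i = 0 then PowerSeries.coeff j f else 0) *
            MvPowerSeries.coeff d (u ^ i * v ^ j) := by
        exact Finset.sum_congr rfl fun i _ => Finset.sum_congr rfl fun j _ => by
          rw [coeff_substPS_X1]
    _ = ∑ j ∈ Finset.range (D + 1), PowerSeries.coeff j f * MvPowerSeries.coeff d (v ^ j) := by
        rw [Finset.sum_comm]
        apply Finset.sum_congr rfl
        intro j _
        rw [Finset.sum_eq_single_of_mem 0 (mem_range.mpr (by omega))]
        · rw [if_pos rfl, pow_zero, one_mul]
        · intro i _ hi
          rw [if_neg hi, zero_mul]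

lemma ps_coeff_eq (m : ℕ) (x : PowerSeries A) :
    PowerSeries.coeff m x = MvPowerSeries.coeff (Finsupp.single () m) x := rfl

lemma substPS_X_right (f : PowerSeries A) : substPS f PowerSeries.X = f := by
  classical
  apply PowerSeries.ext
  intro n
  have hX : MvPowerSeries.constantCoeff (PowerSeries.X : PowerSeries A) = 0 :=
    MvPowerSeries.constantCoeff_X ()
  rw [ps_coeff_eq, coeff_substPS f hX (le_of_eq (deg_single () n))]
  have hc : ∀ k : ℕ, MvPowerSeries.coeff (Finsupp.single () n)
      ((PowerSeries.X : PowerSeries A) ^ k) = if n = k then 1 else 0 := by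
    intro k
    rw [← ps_coeff_eq]
    simp [PowerSeries.coeff_X_pow]
  simp_rw [hc]
  rw [Finset.sum_eq_single_of_mem n (mem_range.mpr (by omega))]
  · rw [if_pos rfl, mul_one]
  · intro k _ hk
    rw [if_neg (Ne.symm hk), mul_zero]

lemma substPS_X_left {w : MvPowerSeries τ A} (hw : MvPowerSeries.constantCoeff w = 0) :
    substPS (PowerSeries.X : PowerSeries A) w = w := by
  classical
  apply MvPowerSeries.ext
  intro d
  rw [coeff_substPS _ hw (le_refl (deg d))]
  by_cases hD : 1 ≤ deg d
  · rw [Finset.sum_eq_single_of_mem 1 (mem_range.mpr (by omega))]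
    · rw [PowerSeries.coeff_one_X, one_mul, pow_one]
    · intro k _ hk
      rw [PowerSeries.coeff_X, if_neg hk, zero_mul]
  · have hd0 : d = 0 := deg_eq_zero (by omega)
    subst hd0
    rw [deg_zero]
    rw [show range (0 + 1) = {0} from rfl, Finset.sum_singleton]
    rw [pow_zero]
    simp [PowerSeries.coeff_X, MvPowerSeries.coeff_zero_eq_constantCoeff_apply, hw]

lemma substPS_subst2_ps (G : MvPowerSeries (Fin 2) A) {u v : PowerSeries A}
    (hu : MvPowerSeries.constantCoeff u = 0)
    (hv : MvPowerSeries.constantCoeff v = 0)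
    {w : MvPowerSeries τ A} (hw : MvPowerSeries.constantCoeff w = 0) :
    substPS (subst2 G u v) w = subst2 G (substPS u w) (substPS v w) := by
  apply MvPowerSeries.ext
  intro d
  set D := deg d with hD
  have hsu : MvPowerSeries.constantCoeff (substPS u w) = 0 := by
    rw [constantCoeff_substPS]; exact hu
  have hsv : MvPowerSeries.constantCoeff (substPS v w) = 0 := by
    rw [constantCoeff_substPS]; exact hv
  have lhs_eq : MvPowerSeries.coeff d (substPS (subst2 G u v) w) =
      ∑ m ∈ Finset.range (D + 1), ∑ e ∈ Finset.range (D + 1) ×ˢ range (D + 1),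
        MvPowerSeries.coeff (mon2 e.1 e.2) G *
          (MvPowerSeries.coeff (Finsupp.single () m) (u ^ e.1 * v ^ e.2) *
            MvPowerSeries.coeff d (w ^ m)) := by
    rw [coeff_substPS _ hw (le_refl D)]
    apply Finset.sum_congr rfl
    intro m hm
    simp only [mem_range] at hm
    rw [ps_coeff_eq, coeff_subst2 G hu hv (show deg (Finsupp.single () m) ≤ D by
      rw [deg_single]; omega)]
    rw [Finset.sum_mul]
    apply Finset.sum_congr rfl
    intro e _
    ring
  have rhs_eq : MvPowerSeries.coeff d (subst2 G (substPS u w) (substPS v w)) =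
      ∑ e ∈ Finset.range (D + 1) ×ˢ range (D + 1), ∑ m ∈ Finset.range (D + 1),
        MvPowerSeries.coeff (mon2 e.1 e.2) G *
          (MvPowerSeries.coeff (Finsupp.single () m) (u ^ e.1 * v ^ e.2) *
            MvPowerSeries.coeff d (w ^ m)) := by
    rw [coeff_subst2 G hsu hsv (le_refl D)]
    apply Finset.sum_congr rfl
    rintro ⟨i, j⟩ _
    dsimp only
    have hmul : (substPS u w) ^ i * (substPS v w) ^ j = substPS (u ^ i * v ^ j) w := by
      rw [substPS_mul _ _ hw, substPS_pow _ hw, substPS_pow _ hw]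
    rw [hmul, coeff_substPS _ hw (le_refl D), Finset.mul_sum]
    apply Finset.sum_congr rfl
    intro m _
    rw [ps_coeff_eq]
  rw [lhs_eq, rhs_eq, Finset.sum_comm]

lemma substPS_zero_left (g : MvPowerSeries τ A) : substPS (0 : PowerSeries A) g = 0 := by
  apply MvPowerSeries.ext
  intro d
  rw [coeff_substPS_def]
  simp

lemma substPS_zero_right {f : PowerSeries A} (hf : PowerSeries.constantCoeff f = 0) :
    substPS f (0 : MvPowerSeries τ A) = 0 := by
  apply MvPowerSeries.ext
  intro d
  rw [coeff_substPS_def]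
  rw [map_zero]
  apply Finset.sum_eq_zero
  intro k _
  match k with
  | 0 =>
    rw [show PowerSeries.coeff 0 f = PowerSeries.constantCoeff f from
      PowerSeries.coeff_zero_eq_constantCoeff_apply f, hf, zero_mul]
  | k + 1 =>
    rw [zero_pow (Nat.succ_ne_zero k), map_zero, mul_zero]

lemma isFGL_constantCoeff {F : MvPowerSeries (Fin 2) A} (hF : IsFGL F) :
    MvPowerSeries.constantCoeff F = 0 := by
  have h1 := hF.1
  have h : MvPowerSeries.constantCoeff
        (subst2 F (MvPowerSeries.X 0) (0 : MvPowerSeries ℕ A)) =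
      MvPowerSeries.constantCoeff (MvPowerSeries.X 0) := by rw [h1]
  rwa [constantCoeff_subst2, MvPowerSeries.constantCoeff_X] at h

lemma constantCoeff_nSeries {F : MvPowerSeries (Fin 2) A}
    (hF0 : MvPowerSeries.constantCoeff F = 0) (m : ℕ) :
    MvPowerSeries.constantCoeff (nSeries F m) = 0 := by
  induction m with
  | zero => rw [nSeries]; exact map_zero _
  | succ m ih => rw [nSeries, constantCoeff_subst2, hF0]

lemma hom_nSeries {F G : MvPowerSeries (Fin 2) A}
    (hF0 : MvPowerSeries.constantCoeff F = 0)
    {φ : PowerSeries A} (hom : IsHom F G φ) (m : ℕ) :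
    substPS φ (nSeries F m) = substPS (nSeries G m) φ := by
  have hφ0 : PowerSeries.constantCoeff φ = 0 := hom.1
  have hφ0' : MvPowerSeries.constantCoeff φ = 0 := hφ0
  have hX : MvPowerSeries.constantCoeff (PowerSeries.X : PowerSeries A) = 0 :=
    MvPowerSeries.constantCoeff_X ()
  induction m with
  | zero =>
    rw [nSeries, nSeries, substPS_zero_left, substPS_zero_right hφ0]
  | succ m ih =>
    have hmF : MvPowerSeries.constantCoeff (nSeries F m) = 0 :=
      constantCoeff_nSeries hF0 m
    have hP0 : MvPowerSeries.constantCoeff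
        (substPS φ (MvPowerSeries.X 0)) = 0 := by
      rw [constantCoeff_substPS]; exact hφ0
    have hP1 : MvPowerSeries.constantCoeff
        (substPS φ (MvPowerSeries.X 1)) = 0 := by
      rw [constantCoeff_substPS]; exact hφ0
    have hmG : PowerSeries.constantCoeff (nSeries G m) = 0 := by
      have h1 : MvPowerSeries.constantCoeff (substPS φ (nSeries F m)) = 0 := by
        rw [constantCoeff_substPS]; exact hφ0
      rw [ih] at h1
      rwa [constantCoeff_substPS] at h1
    calc substPS φ (nSeries F (m + 1))
        = substPS φ (subst2 F PowerSeries.X (nSeries F m)) := by rw [nSeries]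
      _ = subst2 (substPS φ F) PowerSeries.X (nSeries F m) :=
          substPS_subst2 φ hF0 hX hmF
      _ = subst2 (subst2 G (substPS φ (MvPowerSeries.X 0)) (substPS φ (MvPowerSeries.X 1)))
            PowerSeries.X (nSeries F m) := by rw [hom.2]
      _ = subst2 G (subst2 (substPS φ (MvPowerSeries.X 0)) PowerSeries.X (nSeries F m))
            (subst2 (substPS φ (MvPowerSeries.X 1)) PowerSeries.X (nSeries F m)) :=
          subst2_subst2 G hP0 hP1 hX hmF
      _ = subst2 G (substPS φ PowerSeries.X) (substPS φ (nSeries F m)) := by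
          rw [subst2_substPS_X0 φ hX hmF, subst2_substPS_X1 φ hX hmF]
      _ = subst2 G (substPS PowerSeries.X φ) (substPS (nSeries G m) φ) := by
          rw [substPS_X_right, substPS_X_left hφ0', ih]
      _ = substPS (subst2 G PowerSeries.X (nSeries G m)) φ :=
          (substPS_subst2_ps G hX hmG hφ0').symm
      _ = substPS (nSeries G (m + 1)) φ := by rw [nSeries]

lemma ps_coeff_substPS (f : PowerSeries A) {g : PowerSeries A}
    (hg : PowerSeries.constantCoeff g = 0) {m M : ℕ} (hM : m ≤ M) :
    PowerSeries.coeff m (substPS f g) =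
      ∑ k ∈ Finset.range (M + 1), PowerSeries.coeff k f * PowerSeries.coeff m (g ^ k) := by
  rw [ps_coeff_eq, coeff_substPS f hg
    (show deg (Finsupp.single () m) ≤ M by rw [deg_single]; omega)]
  rfl

lemma ps_coeff_pow_low {q : PowerSeries A} {r : ℕ}
    (hq : ∀ i < r, PowerSeries.coeff i q = 0) :
    ∀ (k : ℕ) {m : ℕ}, m < k * r → PowerSeries.coeff m (q ^ k) = 0 := by
  intro k
  induction k with
  | zero =>
    intro m hm
    rw [zero_mul] at hm
    exact absurd hm (Nat.not_lt_zero m)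
  | succ k ih =>
    intro m hm
    rw [pow_succ, PowerSeries.coeff_mul]
    apply Finset.sum_eq_zero
    rintro ⟨a, b⟩ hab
    dsimp only
    rw [Finset.HasAntidiagonal.mem_antidiagonal] at hab
    rcases Nat.lt_or_ge b r with hb | hb
    · rw [hq b hb, mul_zero]
    · have hexp : (k + 1) * r = k * r + r := by ring
      have : a < k * r := by omega
      rw [ih this, zero_mul]

lemma ps_coeff_pow_lead {q : PowerSeries A} {r : ℕ}
    (hq : ∀ i < r, PowerSeries.coeff i q = 0) (k : ℕ) :
    PowerSeries.coeff (k * r) (q ^ k) = (PowerSeries.coeff r q) ^ k := by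
  induction k with
  | zero => simp
  | succ k ih =>
    rw [pow_succ, PowerSeries.coeff_mul]
    rw [Finset.sum_eq_single_of_mem (k * r, r)
      (by rw [Finset.HasAntidiagonal.mem_antidiagonal]; ring)]
    · rw [ih, pow_succ]
    · rintro ⟨a, b⟩ hab hne
      dsimp only
      rw [Finset.HasAntidiagonal.mem_antidiagonal] at hab
      rcases Nat.lt_or_ge b r with hb | hb
      · rw [hq b hb, mul_zero]
      · by_cases hbe : b = r
        · subst hbe
          have hexp : (k + 1) * b = k * b + b := by ring
          have ha : a = k * b := by omega
          exact absurd (by rw [ha]) hne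
        · have hexp : (k + 1) * r = k * r + r := by ring
          have : a < k * r := by omega
          rw [ps_coeff_pow_low hq k this, zero_mul]

end FGL

open FGL

/-- Height is an isomorphism invariant, and under an isomorphism `φ : F → G` with
linear coefficient `c`, the coefficients `a`, `b` of `x^{p^n}` in the `p`-series of
`F`, `G` (for `F` of height `≥ n`) transform by `b·c^{p^n} = c·a`.  This is the
transformation rule making `v_n` a section of `ω^{⊗(p^n−1)}`. -/
theorem vn_transformation_rule (p : ℕ) (hp : p.Prime) (A : Type*) [CommRing A]
    (hchar : (p : A) = 0) (n : ℕ)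
    (F G : MvPowerSeries (Fin 2) A) (hF : IsFGL F) (hG : IsFGL G)
    (φ : PowerSeries A) (hφ : IsIso F G φ)
    (hht : ∀ i < p ^ n, PowerSeries.coeff i (nSeries F p) = 0) :
    (∀ i < p ^ n, PowerSeries.coeff i (nSeries G p) = 0) ∧
    PowerSeries.coeff (p ^ n) (nSeries G p) * PowerSeries.coeff 1 φ ^ p ^ n =
      PowerSeries.coeff 1 φ * PowerSeries.coeff (p ^ n) (nSeries F p) ∧
    (PowerSeries.coeff (p ^ n) (nSeries F p) = 0 ↔
      PowerSeries.coeff (p ^ n) (nSeries G p) = 0) ∧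
    (IsUnit (PowerSeries.coeff (p ^ n) (nSeries F p)) ↔
      IsUnit (PowerSeries.coeff (p ^ n) (nSeries G p))) := by
  obtain ⟨hom, hc⟩ := hφ
  have hφ0 : PowerSeries.constantCoeff φ = 0 := hom.1
  set c := PowerSeries.coeff 1 φ with hcdef
  set N := p ^ n with hNdef
  have hN1 : 1 ≤ N := Nat.one_le_pow n p hp.pos
  have hF0 : MvPowerSeries.constantCoeff F = 0 := isFGL_constantCoeff hF
  have key := hom_nSeries hF0 hom p
  set f := nSeries F p with hfdef
  set g := nSeries G p with hgdef
  have hfc : PowerSeries.constantCoeff f = 0 := constantCoeff_nSeries hF0 p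
  have hφlow : ∀ i < 1, PowerSeries.coeff i φ = 0 := by
    intro i hi
    have : i = 0 := by omega
    subst this
    rw [PowerSeries.coeff_zero_eq_constantCoeff]
    exact hφ0
  have hφlead : ∀ k : ℕ, PowerSeries.coeff k (φ ^ k) = c ^ k := by
    intro k
    have := ps_coeff_pow_lead hφlow k
    rwa [mul_one] at this
  -- Step A: all coefficients of [p]_G below N vanish
  have stepA : ∀ i < N, PowerSeries.coeff i g = 0 := by
    intro i
    induction i using Nat.strong_induction_on with
    | _ i IH =>
    intro hiN
    have h := congrArg (PowerSeries.coeff i) key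
    rw [ps_coeff_substPS φ hfc (le_refl i), ps_coeff_substPS g hφ0 (le_refl i)] at h
    have hL : ∑ k ∈ Finset.range (i + 1), PowerSeries.coeff k φ * PowerSeries.coeff i (f ^ k) = 0 := by
      apply Finset.sum_eq_zero
      intro k _
      rcases Nat.eq_zero_or_pos k with hk0 | hk1
      · subst hk0
        rw [PowerSeries.coeff_zero_eq_constantCoeff_apply, hφ0, zero_mul]
      · have hlt : i < k * N :=
          lt_of_lt_of_le hiN (le_trans (by omega) (Nat.mul_le_mul_right N hk1))
        rw [ps_coeff_pow_low hht k hlt, mul_zero]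
    rw [hL, Finset.sum_range_succ] at h
    have hz : ∑ k ∈ Finset.range i, PowerSeries.coeff k g * PowerSeries.coeff i (φ ^ k) = 0 := by
      apply Finset.sum_eq_zero
      intro k hk
      have hki := Finset.mem_range.mp hk
      rw [IH k hki (by omega), zero_mul]
    rw [hz, zero_add, hφlead i] at h
    exact ((hc.pow i).mul_left_eq_zero).mp h.symm
  -- Step B: the leading coefficients
  have h := congrArg (PowerSeries.coeff N) key
  rw [ps_coeff_substPS φ hfc (le_refl N), ps_coeff_substPS g hφ0 (le_refl N)] at h
  have hL : ∑ k ∈ Finset.range (N + 1), PowerSeries.coeff k φ * PowerSeries.coeff N (f ^ k) =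
      c * PowerSeries.coeff N f := by
    rw [Finset.sum_eq_single_of_mem 1 (Finset.mem_range.mpr (by omega))]
    · rw [pow_one]
    · intro k _ hne
      rcases Nat.eq_zero_or_pos k with hk0 | hk1
      · subst hk0
        rw [PowerSeries.coeff_zero_eq_constantCoeff_apply, hφ0, zero_mul]
      · have hk2 : 2 ≤ k := by omega
        have hlt : N < k * N :=
          lt_of_lt_of_le (by omega) (Nat.mul_le_mul_right N hk2)
        rw [ps_coeff_pow_low hht k hlt, mul_zero]
  have hR : ∑ k ∈ Finset.range (N + 1), PowerSeries.coeff k g * PowerSeries.coeff N (φ ^ k) =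
      PowerSeries.coeff N g * c ^ N := by
    rw [Finset.sum_range_succ]
    have hz : ∑ k ∈ Finset.range N, PowerSeries.coeff k g * PowerSeries.coeff N (φ ^ k) = 0 := by
      apply Finset.sum_eq_zero
      intro k hk
      rw [stepA k (Finset.mem_range.mp hk), zero_mul]
    rw [hz, zero_add, hφlead N]
  rw [hL, hR] at h
  -- h : c * coeff N f = coeff N g * c ^ N
  refine ⟨stepA, h.symm, ?_, ?_⟩
  · constructor
    · intro ha
      have h2 : PowerSeries.coeff N g * c ^ N = 0 := by rw [← h, ha, mul_zero]
      exact ((hc.pow N).mul_left_eq_zero).mp h2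
    · intro hb
      have h2 : c * PowerSeries.coeff N f = 0 := by rw [h, hb, zero_mul]
      exact (hc.mul_right_eq_zero).mp h2
  · constructor
    · intro ha
      have h2 : IsUnit (PowerSeries.coeff N g * c ^ N) := by
        rw [← h]; exact hc.mul ha
      exact isUnit_of_mul_isUnit_left h2
    · intro hb
      have h2 : IsUnit (c * PowerSeries.coeff N f) := by
        rw [h]; exact hb.mul (hc.pow N)
      exact isUnit_of_mul_isUnit_right h2
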